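/- (Second-order condition at a minimizing direction; step (5) in the proof of the paper's Lemma on holomorphic sectional curvature.) Let R be a Kähler-like curvature tensor on V and let u be a unit vector with H(u) ≤ H(v) for every unit vector v ∈ V. Then for every unit vector w ∈ V with ⟨w,u⟩ = 0, the real number R(u,u,w,w) satisfies 2·R(u,u,w,w) ≥ H(u) = R(u,u,u,u). -/

import Mathlib

/-- A Kähler-like curvature tensor on a complex vector space `V`:
a map `R : V × V × V × V → ℂ` that is complex-linear in the first and third
arguments, conjugate-linear in the second and fourth arguments, and satisfies
the symmetries `R(X,Y,Z,W) = R(Z,Y,X,W)` and `R(X,Y,Z,W) = conj (R(Y,X,W,Z))`. -/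
structure IsKahlerLike {V : Type*} [AddCommGroup V] [Module ℂ V]
    (R : V → V → V → V → ℂ) : Prop where
  add1 : ∀ X X' Y Z W, R (X + X') Y Z W = R X Y Z W + R X' Y Z W
  smul1 : ∀ (a : ℂ) (X Y Z W), R (a • X) Y Z W = a * R X Y Z W
  add2 : ∀ X Y Y' Z W, R X (Y + Y') Z W = R X Y Z W + R X Y' Z W
  smul2 : ∀ (a : ℂ) (X Y Z W), R X (a • Y) Z W = (starRingEnd ℂ) a * R X Y Z W
  add3 : ∀ X Y Z Z' W, R X Y (Z + Z') W = R X Y Z W + R X Y Z' W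
  smul3 : ∀ (a : ℂ) (X Y Z W), R X Y (a • Z) W = a * R X Y Z W
  add4 : ∀ X Y Z W W', R X Y Z (W + W') = R X Y Z W + R X Y Z W'
  smul4 : ∀ (a : ℂ) (X Y Z W), R X Y Z (a • W) = (starRingEnd ℂ) a * R X Y Z W
  sym13 : ∀ X Y Z W, R X Y Z W = R Z Y X W
  symConj : ∀ X Y Z W, R X Y Z W = (starRingEnd ℂ) (R Y X W Z)

theorem quad_coeff_nonneg (b c : ℝ) (h : ∀ t : ℝ, 0 ≤ t^2 * b + t^4 * c) : 0 ≤ b := by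
  by_contra hb
  push_neg at hb
  rcases le_or_gt c 0 with hc | hc
  · have := h 1; nlinarith
  · have ht := h (Real.sqrt (-b/(2*c)))
    have h2 : Real.sqrt (-b/(2*c)) ^ 2 = -b/(2*c) :=
      Real.sq_sqrt (div_nonneg (by linarith) (by linarith))
    have h4 : Real.sqrt (-b/(2*c)) ^ 4 = (-b/(2*c))^2 := by
      rw [show (4:ℕ) = 2*2 from rfl, pow_mul, h2]
    rw [h2, h4] at ht
    have hc0 : c ≠ 0 := ne_of_gt hc
    field_simp at ht
    nlinarith [mul_pos (mul_pos_of_neg_of_neg hb hb) hc]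

theorem aux_ineq {V : Type*} [NormedAddCommGroup V] [InnerProductSpace ℂ V]
    (R : V → V → V → V → ℂ) (hR : IsKahlerLike R)
    (u : V) (hu : ‖u‖ = 1)
    (hmin : ∀ v : V, ‖v‖ = 1 → (R u u u u).re ≤ (R v v v v).re)
    (w : V) (hw : ‖w‖ = 1) (hwu : (inner ℂ w u : ℂ) = 0) :
    2 * (R u u u u).re ≤
      (R w w u u + R w u u w + R u w w u + R u u w w + R w u w u + R u w u w).re := by
  have hwu' : (inner ℂ u w : ℂ) = 0 := by
    rw [← inner_conj_symm, hwu, map_zero]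
  have hnorm : ∀ t : ℝ, ‖u + (t:ℂ) • w‖^2 = 1 + t^2 := by
    intro t
    have h := norm_add_sq (𝕜 := ℂ) u ((t:ℂ) • w)
    rw [inner_smul_right, hwu'] at h
    rw [norm_smul] at h
    simp [hu, hw] at h
    exact_mod_cast h
  have key : ∀ t : ℝ, (1+t^2)^2 * (R u u u u).re ≤
      (R (u+(t:ℂ)•w) (u+(t:ℂ)•w) (u+(t:ℂ)•w) (u+(t:ℂ)•w)).re := by
    intro t
    set x := u + (t:ℂ) • w with hx
    have hpos : (0:ℝ) < 1 + t^2 := by positivity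
    set c : ℝ := (Real.sqrt (1+t^2))⁻¹ with hcdef
    have hs : Real.sqrt (1+t^2) > 0 := Real.sqrt_pos.mpr hpos
    have hxnorm : ‖x‖ = Real.sqrt (1+t^2) := by
      rw [← Real.sqrt_sq (norm_nonneg x)]
      rw [hnorm t]
    have hcx : ‖(c:ℂ) • x‖ = 1 := by
      rw [norm_smul, hxnorm, Complex.norm_real, Real.norm_eq_abs,
        abs_of_pos (inv_pos.mpr hs), inv_mul_cancel₀ (ne_of_gt hs)]
    have hmin' := hmin ((c:ℂ) • x) hcx
    rw [hR.smul1, hR.smul2, hR.smul3, hR.smul4, Complex.conj_ofReal,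
      show ((c:ℂ) * ((c:ℂ) * ((c:ℂ) * ((c:ℂ) * R x x x x)))) = ((c^4 : ℝ):ℂ) * R x x x x by
        push_cast; ring,
      Complex.re_ofReal_mul] at hmin'
    have hc4 : c^4 = ((1+t^2)^2)⁻¹ := by
      have h4 : (Real.sqrt (1+t^2))^4 = (1+t^2)^2 := by
        rw [show (4:ℕ) = 2*2 from rfl, pow_mul, Real.sq_sqrt hpos.le]
      rw [hcdef, inv_pow, h4]
    rw [hc4] at hmin'
    rw [← le_div_iff₀' (by positivity)]
    rw [div_eq_inv_mul]
    exact hmin'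
  have expand : ∀ t : ℝ,
      (R (u+(t:ℂ)•w) (u+(t:ℂ)•w) (u+(t:ℂ)•w) (u+(t:ℂ)•w)).re
        + (R (u+((-t:ℝ):ℂ)•w) (u+((-t:ℝ):ℂ)•w) (u+((-t:ℝ):ℂ)•w) (u+((-t:ℝ):ℂ)•w)).re
      = 2 * (R u u u u).re
        + 2*t^2 * (R w w u u + R w u u w + R u w w u + R u u w w + R w u w u + R u w u w).re
        + 2*t^4 * (R w w w w).re := by
    intro t
    have hC : R (u+(t:ℂ)•w) (u+(t:ℂ)•w) (u+(t:ℂ)•w) (u+(t:ℂ)•w)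
        + R (u+((-t:ℝ):ℂ)•w) (u+((-t:ℝ):ℂ)•w) (u+((-t:ℝ):ℂ)•w) (u+((-t:ℝ):ℂ)•w)
      = ((2:ℝ):ℂ) * R u u u u
        + ((2*t^2:ℝ):ℂ) * (R w w u u + R w u u w + R u w w u + R u u w w + R w u w u + R u w u w)
        + ((2*t^4:ℝ):ℂ) * R w w w w := by
      simp only [hR.add1, hR.add2, hR.add3, hR.add4, hR.smul1, hR.smul2, hR.smul3, hR.smul4,
        Complex.conj_ofReal]
      push_cast
      ring
    have h := congrArg Complex.re hC
    simp only [Complex.add_re, Complex.re_ofReal_mul] at h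
    simp only [Complex.add_re]
    linarith [h]
  have main : ∀ t : ℝ, 0 ≤ t^2 * (2 * (R w w u u + R w u u w + R u w w u + R u u w w + R w u w u + R u w u w).re - 4 * (R u u u u).re)
      + t^4 * (2 * (R w w w w).re - 2 * (R u u u u).re) := by
    intro t
    have h1 := key t
    have h2 := key (-t)
    have h3 := expand t
    push_cast at h2 h3
    nlinarith [h1, h2, h3]
  have := quad_coeff_nonneg _ _ main
  linarith

/-- Second-order condition at a minimizing direction: if the unit vector `u` minimizes the
holomorphic sectional curvature over unit vectors, then for every unit vector `w` orthogonal
to `u` one has `2·R(u,u,w,w) ≥ H(u) = R(u,u,u,u)`. -/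
theorem kahlerLike_min_second_order {V : Type*} [NormedAddCommGroup V] [InnerProductSpace ℂ V]
    [FiniteDimensional ℂ V]
    (R : V → V → V → V → ℂ) (hR : IsKahlerLike R)
    (u : V) (hu : ‖u‖ = 1)
    (hmin : ∀ v : V, ‖v‖ = 1 → (R u u u u).re ≤ (R v v v v).re) :
    ∀ w : V, ‖w‖ = 1 → (inner ℂ w u : ℂ) = 0 →
      (R u u u u).re ≤ 2 * (R u u w w).re := by
  intro w hw hwu
  have e1 := aux_ineq R hR u hu hmin w hw hwu
  have hw2 : ‖Complex.I • w‖ = 1 := by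
    rw [norm_smul]; simp [hw]
  have hwu2 : (inner ℂ (Complex.I • w) u : ℂ) = 0 := by
    rw [inner_smul_left, hwu, mul_zero]
  have e2 := aux_ineq R hR u hu hmin (Complex.I • w) hw2 hwu2
  have hsum : R (Complex.I•w) (Complex.I•w) u u + R (Complex.I•w) u u (Complex.I•w)
      + R u (Complex.I•w) (Complex.I•w) u + R u u (Complex.I•w) (Complex.I•w)
      + R (Complex.I•w) u (Complex.I•w) u + R u (Complex.I•w) u (Complex.I•w)
    = R w w u u + R w u u w + R u w w u + R u u w w - R w u w u - R u w u w := by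
    simp only [hR.smul1, hR.smul2, hR.smul3, hR.smul4, Complex.conj_I]
    ring_nf
    simp only [Complex.I_sq]
    ring
  rw [hsum] at e2
  have r1 : (R w u u w).re = (R u u w w).re := by rw [hR.sym13 u u w w]
  have r2 : (R w w u u).re = (R u w w u).re := by rw [hR.sym13 w w u u]
  have r3 : (R u w w u).re = (R w u u w).re := by rw [hR.symConj u w w u, Complex.conj_re]
  simp only [Complex.add_re, Complex.sub_re] at e1 e2
  linarith
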